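/- Let R = ⊕_{p≥0} R_p be a commutative ℕ-graded ring and let y₁,…,yₙ ∈ R be elements of the form yᵢ = xᵢ + (element of F^{kᵢ−1}R), where xᵢ ∈ R_{kᵢ} is homogeneous of degree kᵢ and F^aR := ⊕_{p≤a} R_p. If x₁,…,xₙ is an R-regular sequence in every order, then y₁,…,yₙ is an R-regular sequence in every order. -/

import Mathlib

/-- A sequence (given as a list) `a₁, …, aₙ` in a commutative ring `A` is `A`-regular if for
each `i`, `aᵢ` is not a zero divisor on `A ⧸ (a₁, …, a_{i-1})`. -/
def IsRegularSeq {A : Type*} [CommRing A] (l : List A) : Prop :=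
  ∀ (i : ℕ) (h : i < l.length), ∀ x : A,
    l.get ⟨i, h⟩ * x ∈ Ideal.span {y | y ∈ l.take i} →
      x ∈ Ideal.span {y | y ∈ l.take i}

/-- `Fmem 𝒜 a r` says that `r ∈ F^aR = ⊕_{p ≤ a} R_p`: all homogeneous components of `r`
of degree `> a` vanish. -/
def Fmem {R : Type*} [CommRing R] (𝒜 : ℕ → AddSubgroup R) [GradedRing 𝒜] (a : ℤ)
    (r : R) : Prop :=
  ∀ p : ℕ, a < (p : ℤ) → (DirectSum.decompose 𝒜 r p : R) = 0

set_option linter.unusedSectionVars false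
set_option linter.unusedVariables false

section Kit
variable {R : Type*} [CommRing R] (𝒜 : ℕ → AddSubgroup R) [GradedRing 𝒜]

noncomputable def pz (q : ℤ) (r : R) : R :=
  if 0 ≤ q then (DirectSum.decompose 𝒜 r q.toNat : R) else 0

variable {𝒜}

theorem pz_natCast (p : ℕ) (r : R) : pz 𝒜 (p : ℤ) r = (DirectSum.decompose 𝒜 r p : R) := by
  simp [pz]

theorem pz_zero (q : ℤ) : pz 𝒜 q (0 : R) = 0 := by
  simp [pz]

theorem pz_add (q : ℤ) (r s : R) : pz 𝒜 q (r + s) = pz 𝒜 q r + pz 𝒜 q s := by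
  unfold pz
  split
  · simp
  · simp

theorem pz_neg (q : ℤ) (r : R) : pz 𝒜 q (-r) = -pz 𝒜 q r := by
  unfold pz; split
  · rw [DirectSum.decompose_neg, DFinsupp.neg_apply, AddSubgroup.coe_neg]
  · rw [neg_zero]

theorem pz_sub (q : ℤ) (r s : R) : pz 𝒜 q (r - s) = pz 𝒜 q r - pz 𝒜 q s := by
  rw [sub_eq_add_neg, pz_add, pz_neg, sub_eq_add_neg]

theorem pz_sum {ι : Type*} (q : ℤ) (t : Finset ι) (f : ι → R) :
    pz 𝒜 q (∑ i ∈ t, f i) = ∑ i ∈ t, pz 𝒜 q (f i) := by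
  classical
  induction t using Finset.induction with
  | empty => simp [pz_zero]
  | insert _ _ h ih => rw [Finset.sum_insert h, Finset.sum_insert h, pz_add, ih]

/-- `Hmg q r`: `r` is homogeneous of (integer) degree `q`. -/
def Hmg (q : ℤ) (r : R) : Prop := if 0 ≤ q then r ∈ 𝒜 q.toNat else r = 0

theorem hmg_natCast {p : ℕ} {r : R} (h : r ∈ 𝒜 p) : Hmg (𝒜 := 𝒜) (p : ℤ) r := by
  simp [Hmg, h]

theorem hmg_zero (q : ℤ) : Hmg (𝒜 := 𝒜) q (0 : R) := by
  unfold Hmg; split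
  · exact zero_mem _
  · rfl

theorem hmg_pz (q : ℤ) (r : R) : Hmg (𝒜 := 𝒜) q (pz 𝒜 q r) := by
  unfold Hmg pz; split
  · exact SetLike.coe_mem _
  · rfl

theorem hmg_neg {q : ℤ} {r : R} (h : Hmg (𝒜 := 𝒜) q r) : Hmg (𝒜 := 𝒜) q (-r) := by
  unfold Hmg at *; split at h
  · rw [if_pos ‹_›]; exact neg_mem h
  · rw [if_neg ‹¬ _›, h, neg_zero]

theorem pz_of_hmg_same {q : ℤ} {r : R} (h : Hmg (𝒜 := 𝒜) q r) : pz 𝒜 q r = r := by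
  unfold Hmg at h; unfold pz; split at h
  · rw [if_pos ‹_›, DirectSum.decompose_of_mem_same 𝒜 h]
  · rw [if_neg ‹¬ _›, h]

theorem pz_of_hmg_ne {s q : ℤ} {r : R} (h : Hmg (𝒜 := 𝒜) s r) (hne : q ≠ s) :
    pz 𝒜 q r = 0 := by
  unfold Hmg at h; unfold pz; split at h
  · split
    · rw [DirectSum.decompose_of_mem_ne 𝒜 h]
      intro hc
      exact hne (by omega)
    · rfl
  · rw [h]; split <;> simp

theorem hmg_mul {p q : ℤ} {r s : R} (hr : Hmg (𝒜 := 𝒜) p r) (hs : Hmg (𝒜 := 𝒜) q s) :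
    Hmg (𝒜 := 𝒜) (p + q) (r * s) := by
  unfold Hmg at *
  split at hr
  · split at hs
    · rw [if_pos (by omega)]
      have := SetLike.mul_mem_graded hr hs
      rwa [show (p + q).toNat = p.toNat + q.toNat by omega]
    · rw [hs, mul_zero]; split
      · exact zero_mem _
      · rfl
  · rw [hr, zero_mul]; split
    · exact zero_mem _
    · rfl

theorem fmem_pz {a q : ℤ} {r : R} (h : Fmem 𝒜 a r) (hq : a < q) : pz 𝒜 q r = 0 := by
  unfold pz; split
  · exact h q.toNat (by omega)
  · rfl

theorem fmem_of {a : ℤ} {r : R} (h : ∀ q : ℤ, a < q → pz 𝒜 q r = 0) : Fmem 𝒜 a r := by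
  intro p hp
  have := h p hp
  rwa [pz_natCast] at this

theorem fmem_mono {a b : ℤ} {r : R} (hab : a ≤ b) (h : Fmem 𝒜 a r) : Fmem 𝒜 b r :=
  fun p hp => h p (by omega)

theorem fmem_zero (a : ℤ) : Fmem 𝒜 a (0 : R) := fun p _ => by
  rw [DirectSum.decompose_zero]; simp

theorem fmem_add {a : ℤ} {r s : R} (hr : Fmem 𝒜 a r) (hs : Fmem 𝒜 a s) :
    Fmem 𝒜 a (r + s) :=
  fmem_of fun q hq => by rw [pz_add, fmem_pz hr hq, fmem_pz hs hq, add_zero]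

theorem fmem_neg {a : ℤ} {r : R} (hr : Fmem 𝒜 a r) : Fmem 𝒜 a (-r) :=
  fmem_of fun q hq => by rw [pz_neg, fmem_pz hr hq, neg_zero]

theorem fmem_sub {a : ℤ} {r s : R} (hr : Fmem 𝒜 a r) (hs : Fmem 𝒜 a s) :
    Fmem 𝒜 a (r - s) :=
  fmem_of fun q hq => by rw [pz_sub, fmem_pz hr hq, fmem_pz hs hq, sub_zero]

theorem fmem_sum {ι : Type*} {a : ℤ} (t : Finset ι) (f : ι → R)
    (h : ∀ i ∈ t, Fmem 𝒜 a (f i)) : Fmem 𝒜 a (∑ i ∈ t, f i) :=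
  fmem_of fun q hq => by
    rw [pz_sum]
    exact Finset.sum_eq_zero fun i hi => fmem_pz (h i hi) hq

theorem hmg_fmem {q : ℤ} {r : R} (h : Hmg (𝒜 := 𝒜) q r) : Fmem 𝒜 q r :=
  fmem_of fun q' hq' => pz_of_hmg_ne h (by omega)

theorem fmem_pz_self {a : ℤ} {r : R} (h : Fmem 𝒜 a r) : Fmem 𝒜 a (pz 𝒜 a r) :=
  fmem_of fun q hq => pz_of_hmg_ne (hmg_pz a r) (by omega)

theorem fmem_sub_pz {a : ℤ} {r : R} (h : Fmem 𝒜 a r) : Fmem 𝒜 (a - 1) (r - pz 𝒜 a r) :=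
  fmem_of fun q hq => by
    rw [pz_sub]
    rcases eq_or_lt_of_le (show a ≤ q by omega) with rfl | hlt
    · rw [pz_of_hmg_same (hmg_pz a r), sub_self]
    · rw [fmem_pz h hlt, fmem_pz (fmem_pz_self h) hlt, sub_zero]

/-- `pz` of a product with a homogeneous element. -/
theorem pz_mul_hmg {kk : ℤ} {x : R} (hx : Hmg (𝒜 := 𝒜) kk x) (q : ℤ) (r : R) :
    pz 𝒜 q (x * r) = x * pz 𝒜 (q - kk) r := by
  induction r using DirectSum.Decomposition.inductionOn 𝒜 with
  | zero => rw [mul_zero, pz_zero, pz_zero, mul_zero]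
  | @homogeneous p m =>
      have hm : Hmg (𝒜 := 𝒜) (p : ℤ) (m : R) := hmg_natCast m.2
      by_cases hq : q = kk + (p : ℤ)
      · rw [pz_of_hmg_same (hq ▸ hmg_mul hx hm),
          pz_of_hmg_same (show Hmg (𝒜 := 𝒜) (q - kk) (m : R) by rw [hq]; simpa using hm)]
      · rw [pz_of_hmg_ne (hmg_mul hx hm) hq, pz_of_hmg_ne hm (by omega), mul_zero]
  | add r s hr hs => rw [mul_add, pz_add, hr, hs, pz_add, mul_add]

theorem fmem_exists (r : R) : ∃ a : ℤ, Fmem 𝒜 a r := by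
  induction r using DirectSum.Decomposition.inductionOn 𝒜 with
  | zero => exact ⟨0, fmem_zero 0⟩
  | @homogeneous p m => exact ⟨p, hmg_fmem (hmg_natCast m.2)⟩
  | add r s hr hs =>
      obtain ⟨a, ha⟩ := hr
      obtain ⟨b, hb⟩ := hs
      exact ⟨max a b, fmem_add (fmem_mono (le_max_left a b) ha)
        (fmem_mono (le_max_right a b) hb)⟩

theorem fmem_mul {a b : ℤ} {r s : R} (hr : Fmem 𝒜 a r) (hs : Fmem 𝒜 b s) :
    Fmem 𝒜 (a + b) (r * s) := by
  classical
  have key : Fmem 𝒜 (a + b)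
      ((∑ p ∈ (DirectSum.decompose 𝒜 r).support, ((DirectSum.decompose 𝒜 r p : R))) *
       (∑ q ∈ (DirectSum.decompose 𝒜 s).support, ((DirectSum.decompose 𝒜 s q : R)))) := by
    rw [Finset.sum_mul_sum]
    refine fmem_sum _ _ fun p _ => fmem_sum _ _ fun q _ => ?_
    by_cases hp : a < (p : ℤ)
    · rw [hr p hp, zero_mul]; exact fmem_zero _
    · by_cases hq : b < (q : ℤ)
      · rw [hs q hq, mul_zero]; exact fmem_zero _
      · refine fmem_mono (show ((p:ℤ) + (q:ℤ) ≤ a + b) by omega) ?_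
        exact hmg_fmem (hmg_mul (hmg_natCast (SetLike.coe_mem _))
          (hmg_natCast (SetLike.coe_mem _)))
  rwa [DirectSum.sum_support_decompose, DirectSum.sum_support_decompose] at key

end Kit


section Span
variable {R : Type*} [CommRing R] {n : ℕ}

def Ff (n m : ℕ) : Finset (Fin n) := Finset.univ.filter (fun j => (j : ℕ) < m)

theorem mem_Ff {m : ℕ} {j : Fin n} : j ∈ Ff n m ↔ (j : ℕ) < m := by
  simp [Ff]

theorem mem_span_iff (f : Fin n → R) (m : ℕ) (r : R) :
    r ∈ Ideal.span (f '' {j : Fin n | (j : ℕ) < m}) ↔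
      ∃ u : Fin n → R, r = ∑ j ∈ Ff n m, u j * f j := by
  classical
  constructor
  · intro h
    refine Submodule.span_induction ?_ ?_ ?_ ?_ h
    · rintro _ ⟨j, hj, rfl⟩
      refine ⟨fun l => if l = j then 1 else 0, ?_⟩
      simp only [ite_mul, one_mul, zero_mul]
      rw [Finset.sum_ite_eq' (Ff n m) j f, if_pos (mem_Ff.mpr hj)]
    · exact ⟨0, by simp⟩
    · rintro a b _ _ ⟨u, rfl⟩ ⟨v, rfl⟩
      exact ⟨u + v, by rw [← Finset.sum_add_distrib]; simp [add_mul]⟩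
    · rintro a b _ ⟨u, rfl⟩
      refine ⟨fun j => a * u j, ?_⟩
      rw [smul_eq_mul, Finset.mul_sum]
      simp [mul_assoc]
  · rintro ⟨u, rfl⟩
    refine Ideal.sum_mem _ fun j hj => Ideal.mul_mem_left _ _ (Ideal.subset_span ?_)
    exact ⟨j, mem_Ff.mp hj, rfl⟩

theorem koszul (x : Fin n → R) : ∀ (m : ℕ), m ≤ n →
    (∀ i : Fin n, (i : ℕ) < m → ∀ c : R,
      x i * c ∈ Ideal.span (x '' {j : Fin n | (j : ℕ) < (i : ℕ)}) →
      c ∈ Ideal.span (x '' {j : Fin n | (j : ℕ) < (i : ℕ)})) →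
    ∀ c : Fin n → R, ∑ j ∈ Ff n m, c j * x j = 0 →
    ∃ b : Fin n → Fin n → R, (∀ j, b j j = 0) ∧ (∀ j l, b j l = - b l j) ∧
      ∀ j ∈ Ff n m, c j = ∑ l ∈ Ff n m, b j l * x l := by
  classical
  intro m
  induction m with
  | zero =>
      intro _ _ c _
      exact ⟨0, by simp, by simp, fun j hj => by simp [mem_Ff] at hj⟩
  | succ m ih =>
      intro hmn hreg c hc
      set M : Fin n := ⟨m, by omega⟩ with hM
      have hMnot : M ∉ Ff n m := by simp [mem_Ff, hM]
      have hins : Ff n (m + 1) = insert M (Ff n m) := by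
        ext j
        simp only [mem_Ff, Finset.mem_insert, Fin.ext_iff, hM]
        omega
      rw [hins, Finset.sum_insert hMnot] at hc
      have hsum : ∑ j ∈ Ff n m, c j * x j = -(c M * x M) := by linear_combination hc
      have hmem : x M * c M ∈ Ideal.span (x '' {j : Fin n | (j : ℕ) < (M : ℕ)}) := by
        have : x M * c M = -(∑ j ∈ Ff n m, c j * x j) := by rw [hsum]; ring
        rw [this]
        refine neg_mem (Ideal.sum_mem _ fun j hj => Ideal.mul_mem_left _ _
          (Ideal.subset_span ⟨j, ?_, rfl⟩))
        simpa [hM] using mem_Ff.mp hj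
      have hcM := hreg M (by simp [hM]) (c M) hmem
      rw [show ((M : ℕ)) = m from rfl, mem_span_iff] at hcM
      obtain ⟨u, hu⟩ := hcM
      have hc' : ∑ j ∈ Ff n m, (c j + u j * x M) * x j = 0 := by
        rw [Finset.sum_congr rfl (fun j _ => by ring :
          ∀ j ∈ Ff n m, (c j + u j * x M) * x j = c j * x j + u j * x j * x M),
          Finset.sum_add_distrib, ← Finset.sum_mul, hsum]
        rw [show (∑ j ∈ Ff n m, u j * x j) = c M from hu.symm]
        ring
      obtain ⟨b₀, hb₀diag, hb₀anti, hb₀⟩ := ih (by omega)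
        (fun i hi => hreg i (by omega)) _ hc'
      set B : Fin n → Fin n → R := fun j l =>
        if j = M then (if l = M then 0 else u l)
        else (if l = M then -(u j) else b₀ j l) with hB
      refine ⟨B, ?_, ?_, ?_⟩
      · intro j
        by_cases hj : j = M
        · simp [hB, hj]
        · simp [hB, hj, hb₀diag j]
      · intro j l
        by_cases hj : j = M <;> by_cases hl : l = M
        · simp [hB, hj, hl]
        · simp [hB, hj, hl]
        · simp [hB, hj, hl]
        · simp only [hB, if_neg hj, if_neg hl]
          exact hb₀anti j l
      · intro j hj
        rw [hins, Finset.sum_insert hMnot]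
        by_cases hjM : j = M
        · have e1 : B j M * x M = 0 := by simp [hB, hjM]
          have e2 : ∀ l ∈ Ff n m, B j l * x l = u l * x l := fun l hl => by
            simp [hB, hjM, show l ≠ M from fun h => hMnot (h ▸ hl)]
          rw [e1, Finset.sum_congr rfl e2, zero_add, hjM, ← hu]
        · have hjm : j ∈ Ff n m := by
            rcases Finset.mem_insert.mp (hins ▸ hj) with h | h
            · exact absurd h hjM
            · exact h
          have e1 : B j M * x M = -(u j) * x M := by simp [hB, hjM]
          have e2 : ∀ l ∈ Ff n m, B j l * x l = b₀ j l * x l := fun l hl => by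
            simp [hB, hjM, show l ≠ M from fun h => hMnot (h ▸ hl)]
          rw [e1, Finset.sum_congr rfl e2, ← hb₀ j hjm]
          ring

end Span

section Main
variable {R : Type*} [CommRing R] {𝒜 : ℕ → AddSubgroup R} [GradedRing 𝒜]

theorem pz_congr {p q : ℤ} (h : p = q) (r : R) : pz 𝒜 p r = pz 𝒜 q r := by rw [h]

theorem fmem_neg_one {r : R} (h : Fmem 𝒜 (-1) r) : r = 0 := by
  classical
  rw [← DirectSum.sum_support_decompose 𝒜 r]
  exact Finset.sum_eq_zero fun p _ => h p (by omega)

variable {n : ℕ} (x y : Fin n → R) (k : Fin n → ℕ)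

/-- top-degree projection of a product with `y j = x j + lower terms`. -/
theorem pz_top (hx : ∀ i, x i ∈ 𝒜 (k i)) (hxy : ∀ i, Fmem 𝒜 ((k i : ℤ) - 1) (y i - x i))
    (j : Fin n) (D : ℤ) (a : R) (ha : Fmem 𝒜 (D - (k j : ℤ)) a) :
    pz 𝒜 D (a * y j) = x j * pz 𝒜 (D - (k j : ℤ)) a := by
  have h1 : a * y j = x j * a + a * (y j - x j) := by ring
  have h2 : Fmem 𝒜 (D - 1) (a * (y j - x j)) :=
    fmem_mono (by omega) (fmem_mul ha (hxy j))
  rw [h1, pz_add, pz_mul_hmg (hmg_natCast (hx j)), fmem_pz h2 (by omega), add_zero]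

theorem main_step (hx : ∀ i, x i ∈ 𝒜 (k i))
    (hxy : ∀ i, Fmem 𝒜 ((k i : ℤ) - 1) (y i - x i))
    (hregx : ∀ i : Fin n, ∀ c : R,
      x i * c ∈ Ideal.span (x '' {j : Fin n | (j : ℕ) < (i : ℕ)}) →
      c ∈ Ideal.span (x '' {j : Fin n | (j : ℕ) < (i : ℕ)})) :
    ∀ (M : Fin n) (z : R),
      y M * z ∈ Ideal.span (y '' {j : Fin n | (j : ℕ) < (M : ℕ)}) →
      z ∈ Ideal.span (y '' {j : Fin n | (j : ℕ) < (M : ℕ)}) := by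
  classical
  intro M
  -- basic facts
  have hfy : ∀ i, Fmem 𝒜 (k i) (y i) := by
    intro i
    have : y i = x i + (y i - x i) := by ring
    rw [this]
    exact fmem_add (hmg_fmem (hmg_natCast (hx i))) (fmem_mono (by omega) (hxy i))
  -- Step A : improving the degree bound on the coefficients
  have stepA : ∀ (d : ℤ) (z : R), Fmem 𝒜 d z →
      y M * z = y M * z → ∀ (t : ℕ) (a : Fin n → R),
      (∀ j ∈ Ff n (M : ℕ), Fmem 𝒜 (d + (k M : ℤ) - (k j : ℤ) + t) (a j)) →
      (∑ j ∈ Ff n (M : ℕ), a j * y j = y M * z) →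
      ∃ a' : Fin n → R, (∀ j ∈ Ff n (M : ℕ), Fmem 𝒜 (d + (k M : ℤ) - (k j : ℤ)) (a' j)) ∧
        ∑ j ∈ Ff n (M : ℕ), a' j * y j = y M * z := by
    intro d z hz _
    intro t
    induction t with
    | zero =>
        intro a ha hsum
        exact ⟨a, fun j hj => by simpa using ha j hj, hsum⟩
    | succ t iht =>
        intro a ha hsum
        set D : ℤ := d + (k M : ℤ) + (t + 1) with hD
        have haD : ∀ j ∈ Ff n (M : ℕ), Fmem 𝒜 (D - (k j : ℤ)) (a j) := by
          intro j hj
          exact fmem_mono (by omega) (ha j hj)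
        set c : Fin n → R := fun j => pz 𝒜 (D - (k j : ℤ)) (a j) with hc
        -- the top-degree components give a syzygy of the x's
        have hyMz : Fmem 𝒜 ((k M : ℤ) + d) (y M * z) := fmem_mul (hfy M) hz
        have hrel : ∑ j ∈ Ff n (M : ℕ), c j * x j = 0 := by
          have h1 : pz 𝒜 D (∑ j ∈ Ff n (M : ℕ), a j * y j) = pz 𝒜 D (y M * z) := by
            rw [hsum]
          rw [pz_sum, fmem_pz hyMz (by omega)] at h1
          rw [Finset.sum_congr rfl (fun j hj => pz_top x y k hx hxy j D (a j) (haD j hj))]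
            at h1
          rw [← h1]
          exact Finset.sum_congr rfl fun j _ => mul_comm _ _
        obtain ⟨b, hbdiag, hbanti, hb⟩ := koszul x (M : ℕ) (le_of_lt M.isLt)
          (fun i _ => hregx i) c hrel
        set b' : Fin n → Fin n → R :=
          fun j l => pz 𝒜 (D - (k j : ℤ) - (k l : ℤ)) (b j l) with hb'def
        have hb'diag : ∀ j, b' j j = 0 := fun j => by
          rw [hb'def]; simp only; rw [hbdiag j, pz_zero]
        have hb'anti : ∀ j l, b' j l = - b' l j := by
          intro j l
          rw [hb'def]; simp only
          rw [hbanti j l, pz_neg, pz_congr (show D - (k j : ℤ) - (k l : ℤ)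
            = D - (k l : ℤ) - (k j : ℤ) by ring)]
        have hb'hmg : ∀ j l, Hmg (𝒜 := 𝒜) (D - (k j : ℤ) - (k l : ℤ)) (b' j l) :=
          fun j l => hmg_pz _ _
        -- the homogeneous components of the Koszul coefficients still work
        have hb' : ∀ j ∈ Ff n (M : ℕ), c j = ∑ l ∈ Ff n (M : ℕ), x l * b' j l := by
          intro j hj
          have h0 : c j = pz 𝒜 (D - (k j : ℤ)) (c j) := (pz_of_hmg_same (hmg_pz _ _)).symm
          rw [h0, hb j hj, pz_sum]
          refine Finset.sum_congr rfl fun l _ => ?_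
          rw [mul_comm (b j l) (x l), pz_mul_hmg (hmg_natCast (hx l))]
        -- new coefficients
        set a' : Fin n → R := fun j => a j - ∑ l ∈ Ff n (M : ℕ), b' j l * y l with ha'def
        have hsum' : ∑ j ∈ Ff n (M : ℕ), a' j * y j = y M * z := by
          have hdouble : ∑ j ∈ Ff n (M : ℕ), (∑ l ∈ Ff n (M : ℕ), b' j l * y l) * y j
              = 0 := by
            rw [Finset.sum_congr rfl (fun j _ => Finset.sum_mul (Ff n (M : ℕ))
              (fun l => b' j l * y l) (y j)),
              ← Finset.sum_product' (s := Ff n (M : ℕ)) (t := Ff n (M : ℕ))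
              (f := fun j l => (b' j l * y l) * y j)]
            refine Finset.sum_involution (fun p _ => (p.2, p.1)) ?_ ?_ ?_ ?_
            · intro p _
              simp only
              rw [hb'anti p.1 p.2]
              ring
            · intro p _ hp
              intro hcon
              apply hp
              have h2 : p.2 = p.1 := congrArg Prod.fst hcon
              simp only [h2, hb'diag p.1, zero_mul]
            · intro p hp
              rw [Finset.mem_product] at hp ⊢
              exact ⟨hp.2, hp.1⟩
            · intro p _
              rfl
          calc ∑ j ∈ Ff n (M : ℕ), a' j * y j
              = ∑ j ∈ Ff n (M : ℕ), (a j * y j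
                - (∑ l ∈ Ff n (M : ℕ), b' j l * y l) * y j) := by
                refine Finset.sum_congr rfl fun j _ => ?_
                rw [ha'def]; ring
            _ = y M * z := by
                rw [Finset.sum_sub_distrib, hdouble, sub_zero, hsum]
        have ha' : ∀ j ∈ Ff n (M : ℕ), Fmem 𝒜 (d + (k M : ℤ) - (k j : ℤ) + t) (a' j) := by
          intro j hj
          refine fmem_of fun q hq => ?_
          have hDq : D - (k j : ℤ) ≤ q := by omega
          have hS : ∀ l ∈ Ff n (M : ℕ),
              pz 𝒜 (D - (k j : ℤ)) (b' j l * y l) = x l * b' j l := by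
            intro l _
            rw [pz_top x y k hx hxy l (D - (k j : ℤ)) (b' j l)
              (fmem_mono (by omega) (hmg_fmem (hb'hmg j l))),
              pz_of_hmg_same (hb'hmg j l)]
          have hSfm : Fmem 𝒜 (D - (k j : ℤ)) (∑ l ∈ Ff n (M : ℕ), b' j l * y l) := by
            refine fmem_sum _ _ fun l _ => ?_
            exact fmem_mono (by omega)
              (fmem_mul (hmg_fmem (hb'hmg j l)) (hfy l))
          rcases eq_or_lt_of_le hDq with rfl | hlt
          · rw [ha'def]; simp only
            rw [pz_sub, pz_sum, Finset.sum_congr rfl hS, ← hb' j hj]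
            exact sub_self _
          · rw [ha'def]; simp only
            rw [pz_sub, fmem_pz (haD j hj) hlt, fmem_pz hSfm hlt, sub_zero]
        exact iht a' ha' hsum'
  -- main induction on the top degree of z
  have main : ∀ (e : ℕ) (z : R), Fmem 𝒜 ((e : ℤ) - 1) z →
      y M * z ∈ Ideal.span (y '' {j : Fin n | (j : ℕ) < (M : ℕ)}) →
      z ∈ Ideal.span (y '' {j : Fin n | (j : ℕ) < (M : ℕ)}) := by
    intro e
    induction e with
    | zero =>
        intro z hz _
        have hz0 : z = 0 := fmem_neg_one (by simpa using hz)
        rw [hz0]; exact zero_mem _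
    | succ e ihe =>
        intro z hz hyz
        set d : ℤ := (e : ℤ) with hd
        have hzd : Fmem 𝒜 d z := fmem_mono (le_of_eq (by push_cast [hd]; ring)) hz
        obtain ⟨u, hu⟩ := (mem_span_iff y (M : ℕ) _).mp hyz
        choose dj hdj using fun j => fmem_exists (𝒜 := 𝒜) (u j)
        set t : ℕ := Finset.univ.sup
          (fun j : Fin n => (dj j - (d + (k M : ℤ) - (k j : ℤ))).toNat) with ht
        have hbound : ∀ j ∈ Ff n (M : ℕ), Fmem 𝒜 (d + (k M : ℤ) - (k j : ℤ) + t) (u j) := by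
          intro j _
          refine fmem_mono ?_ (hdj j)
          have h1' : (dj j - (d + (k M : ℤ) - (k j : ℤ))).toNat ≤ t := by
            rw [ht]
            exact Finset.le_sup (f := fun j : Fin n =>
              (dj j - (d + (k M : ℤ) - (k j : ℤ))).toNat) (Finset.mem_univ j)
          have h1 : ((dj j - (d + (k M : ℤ) - (k j : ℤ))).toNat : ℤ) ≤ (t : ℤ) :=
            Int.ofNat_le.mpr h1'
          have h2 := Int.self_le_toNat (dj j - (d + (k M : ℤ) - (k j : ℤ)))
          omega
        obtain ⟨a, haF, hasum⟩ := stepA d z hzd rfl t u hbound hu.symm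
        set zd : R := pz 𝒜 d z with hzddef
        have hxrel : x M * zd
            = ∑ j ∈ Ff n (M : ℕ), x j * pz 𝒜 (d + (k M : ℤ) - (k j : ℤ)) (a j) := by
          have h1 := congrArg (pz 𝒜 (d + (k M : ℤ))) hasum
          rw [pz_sum, Finset.sum_congr rfl (fun j hj =>
            pz_top x y k hx hxy j (d + (k M : ℤ)) (a j) (haF j hj)),
            mul_comm (y M) z,
            pz_top x y k hx hxy M (d + (k M : ℤ)) z (fmem_mono (by omega) hzd),
            pz_congr (show d + (k M : ℤ) - (k M : ℤ) = d by ring) z] at h1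
          exact h1.symm
        have hzd_mem : zd ∈ Ideal.span (x '' {j : Fin n | (j : ℕ) < (M : ℕ)}) := by
          apply hregx M
          rw [hxrel]
          exact Ideal.sum_mem _ fun j hj => Ideal.mul_mem_right _ _
            (Ideal.subset_span ⟨j, mem_Ff.mp hj, rfl⟩)
        obtain ⟨v, hv⟩ := (mem_span_iff x (M : ℕ) zd).mp hzd_mem
        set ee : Fin n → R := fun j => pz 𝒜 (d - (k j : ℤ)) (v j) with heedef
        have hzd_eq : zd = ∑ j ∈ Ff n (M : ℕ), x j * ee j := by
          have h0 : zd = pz 𝒜 d zd := (pz_of_hmg_same (hmg_pz _ _)).symm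
          rw [h0, hv, pz_sum]
          refine Finset.sum_congr rfl fun j _ => ?_
          rw [mul_comm (v j) (x j), pz_mul_hmg (hmg_natCast (hx j))]
        set z' : R := z - ∑ j ∈ Ff n (M : ℕ), ee j * y j with hz'def
        have hyz' : y M * z' ∈ Ideal.span (y '' {j : Fin n | (j : ℕ) < (M : ℕ)}) := by
          have h1 : y M * z' = y M * z - ∑ j ∈ Ff n (M : ℕ), (ee j * y M) * y j := by
            rw [hz'def, mul_sub, Finset.mul_sum]
            congr 1
            exact Finset.sum_congr rfl fun j _ => by ring
          rw [h1]
          exact sub_mem hyz (Ideal.sum_mem _ fun j hj => Ideal.mul_mem_left _ _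
            (Ideal.subset_span ⟨j, mem_Ff.mp hj, rfl⟩))
        have hz'fm : Fmem 𝒜 (d - 1) z' := by
          refine fmem_of fun q hq => ?_
          rw [hz'def, pz_sub, pz_sum]
          rcases eq_or_lt_of_le (show d ≤ q by omega) with rfl | hlt
          · rw [Finset.sum_congr rfl (fun j _ => by
              rw [pz_top x y k hx hxy j d (ee j) (hmg_fmem (hmg_pz _ _)),
                pz_of_hmg_same (hmg_pz _ _)] :
              ∀ j ∈ Ff n (M : ℕ), pz 𝒜 d (ee j * y j) = x j * ee j)]
            rw [← hzddef, ← hzd_eq, sub_self]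
          · rw [fmem_pz hzd hlt, Finset.sum_eq_zero (fun j _ => by
              refine fmem_pz (fmem_mono (by omega)
                (fmem_mul (hmg_fmem (hmg_pz (d - (k j : ℤ)) (v j))) (hfy j))) hlt),
              sub_zero]
        have hmem' := ihe z' (by
          refine fmem_mono (le_of_eq ?_) hz'fm
          rw [hd]) hyz'
        have hz_eq : z = z' + ∑ j ∈ Ff n (M : ℕ), ee j * y j := by
          rw [hz'def]; ring
        rw [hz_eq]
        exact add_mem hmem' (Ideal.sum_mem _ fun j hj => Ideal.mul_mem_left _ _
          (Ideal.subset_span ⟨j, mem_Ff.mp hj, rfl⟩))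
  -- conclusion
  intro z hyz
  obtain ⟨dz, hdz⟩ := fmem_exists (𝒜 := 𝒜) z
  refine main ((dz + 1).toNat) z ?_ hyz
  refine fmem_mono ?_ hdz
  have := Int.self_le_toNat (dz + 1)
  omega

end Main


theorem perm_get_equiv {α : Type*} {l₁ l₂ : List α} (h : l₁.Perm l₂) :
    ∃ σ : Fin l₂.length ≃ Fin l₁.length, ∀ i, l₂.get i = l₁.get (σ i) := by
  induction h with
  | nil => exact ⟨Equiv.refl _, fun i => i.elim0⟩
  | @cons a l₁ l₂ _ ih =>
      obtain ⟨σ, hσ⟩ := ih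
      refine ⟨(finSuccEquiv _).trans ((σ.optionCongr).trans (finSuccEquiv _).symm),
        fun i => ?_⟩
      refine Fin.cases ?_ ?_ i
      · simp
      · intro j
        simpa using hσ j
  | swap a b l =>
      refine ⟨Equiv.swap ⟨0, by simp⟩ ⟨1, by simp⟩, fun i => ?_⟩
      obtain ⟨iv, hiv⟩ := i
      match iv, hiv with
      | 0, hiv => rfl
      | 1, hiv => rfl
      | (v + 2), hiv => rfl
  | trans _ _ ih₁ ih₂ =>
      obtain ⟨σ₁, h₁'⟩ := ih₁
      obtain ⟨σ₂, h₂'⟩ := ih₂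
      exact ⟨σ₂.trans σ₁, fun i => (h₂' i).trans (h₁' (σ₂ i))⟩

theorem exists_perm_ofFn {α : Type*} {n : ℕ} (f : Fin n → α) (l : List α)
    (h : l.Perm (List.ofFn f)) : ∃ σ : Equiv.Perm (Fin n), l = List.ofFn (f ∘ σ) := by
  obtain ⟨σ0, hσ0⟩ := perm_get_equiv h.symm
  have hlen : l.length = n := h.length_eq.trans (List.length_ofFn : (List.ofFn f).length = n)
  refine ⟨(finCongr hlen.symm).trans (σ0.trans (finCongr (List.length_ofFn : (List.ofFn f).length = n))), ?_⟩
  apply List.ext_get (by simp [hlen])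
  intro i h1 h2
  rw [hσ0 ⟨i, h1⟩, List.get_ofFn, List.get_ofFn]
  rfl

theorem take_ofFn_set {α : Type*} {n : ℕ} (f : Fin n → α) (i : ℕ) :
    {a | a ∈ (List.ofFn f).take i} = f '' {j : Fin n | (j : ℕ) < i} := by
  ext a
  simp only [Set.mem_setOf_eq, Set.mem_image]
  rw [List.mem_take_iff_getElem]
  constructor
  · rintro ⟨j, hj, rfl⟩
    have hj' : j < n := by
      simp only [lt_inf_iff, List.length_ofFn] at hj
      omega
    refine ⟨⟨j, hj'⟩, ?_, ?_⟩
    · show j < i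
      simp only [lt_inf_iff, List.length_ofFn] at hj
      omega
    · rw [List.getElem_ofFn]
  · rintro ⟨j, hj, rfl⟩
    refine ⟨(j : ℕ), ?_, ?_⟩
    · simp only [lt_inf_iff, List.length_ofFn]
      exact ⟨hj, j.isLt⟩
    · rw [List.getElem_ofFn]

theorem isRegularSeq_ofFn_iff {A : Type*} [CommRing A] {n : ℕ} (f : Fin n → A)
    (IRS : List A → Prop)
    (hIRS : IRS = fun l => ∀ (i : ℕ) (h : i < l.length), ∀ x : A,
      l.get ⟨i, h⟩ * x ∈ Ideal.span {y | y ∈ l.take i} →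
        x ∈ Ideal.span {y | y ∈ l.take i}) :
    IRS (List.ofFn f) ↔ ∀ (i : Fin n) (c : A),
      f i * c ∈ Ideal.span (f '' {j : Fin n | (j : ℕ) < (i : ℕ)}) →
      c ∈ Ideal.span (f '' {j : Fin n | (j : ℕ) < (i : ℕ)}) := by
  subst hIRS
  constructor
  · intro H i c
    have hi : (i : ℕ) < (List.ofFn f).length := by simp
    have hget : (List.ofFn f).get ⟨(i : ℕ), hi⟩ = f i := by
      rw [List.get_ofFn]
      congr 1
    have := H (i : ℕ) hi c
    rwa [hget, take_ofFn_set] at this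
  · intro H i hi c
    have hi' : i < n := by simpa using hi
    have hget : (List.ofFn f).get ⟨i, hi⟩ = f ⟨i, hi'⟩ := by
      rw [List.get_ofFn]
      congr 1
    rw [hget, take_ofFn_set]
    exact H ⟨i, hi'⟩ c


/-- Corollary 4.3: in an ℕ-graded commutative ring `R`, let `yᵢ = xᵢ + (lower degree
terms)` with `xᵢ ∈ R_{kᵢ}` homogeneous.  If `x₁, …, xₙ` is an `R`-regular sequence in
every order, then so is `y₁, …, yₙ`. -/
theorem stmt_6 {R : Type*} [CommRing R] (𝒜 : ℕ → AddSubgroup R) [GradedRing 𝒜]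
    (n : ℕ) (x y : Fin n → R) (k : Fin n → ℕ)
    (hx : ∀ i, x i ∈ 𝒜 (k i))
    (hxy : ∀ i, Fmem 𝒜 ((k i : ℤ) - 1) (y i - x i))
    (hreg : ∀ l : List R, l.Perm (List.ofFn x) → IsRegularSeq l) :
    ∀ l : List R, l.Perm (List.ofFn y) → IsRegularSeq l := by
  intro l hl
  obtain ⟨σ, rfl⟩ := exists_perm_ofFn y l hl
  have hregx : ∀ (i : Fin n) (c : R),
      (x ∘ σ) i * c ∈ Ideal.span ((x ∘ σ) '' {j : Fin n | (j : ℕ) < (i : ℕ)}) →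
      c ∈ Ideal.span ((x ∘ σ) '' {j : Fin n | (j : ℕ) < (i : ℕ)}) := by
    have h1 : IsRegularSeq (List.ofFn (x ∘ σ)) :=
      hreg _ (Equiv.Perm.ofFn_comp_perm σ x)
    exact (isRegularSeq_ofFn_iff (x ∘ σ) IsRegularSeq rfl).mp h1
  refine (isRegularSeq_ofFn_iff (y ∘ σ) IsRegularSeq rfl).mpr ?_
  exact main_step (x ∘ σ) (y ∘ σ) (k ∘ σ) (fun i => hx (σ i)) (fun i => hxy (σ i)) hregx
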